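/- Let M* ⊆ M_1 × ... × M_J be such that for each k and each point m_k ∈ M_k there exists a point of M* whose k-th block is m_k, and similarly for N*. Then δ²(M*, N*) ≤ min over k of [δ²(M_k, N_k) + ∑_{j≠k} Δ²(M_j, N_j)], where Δ(A,B) = sup_{a∈A, b∈B} ‖a−b‖. -/

import Mathlib

/-- Minimum separation distance between two sets. -/
noncomputable def minSep {α : Type*} [PseudoMetricSpace α] (A B : Set α) : ℝ :=
  sInf (Set.image2 dist A B)

/-- Maximum separation distance between two sets. -/
noncomputable def maxSep {α : Type*} [PseudoMetricSpace α] (A B : Set α) : ℝ :=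
  sSup (Set.image2 dist A B)

lemma image2_dist_compact {α : Type*} [PseudoMetricSpace α] {A B : Set α}
    (hA : IsCompact A) (hB : IsCompact B) : IsCompact (Set.image2 dist A B) := by
  rw [← Set.image_uncurry_prod]
  exact (hA.prod hB).image continuous_dist

lemma minSep_nonneg {α : Type*} [PseudoMetricSpace α] (A B : Set α) :
    0 ≤ minSep A B := by
  apply Real.sInf_nonneg
  rintro x ⟨a, _, b, _, rfl⟩
  exact dist_nonneg

theorem joint_min_separation_upper_bound {J n : ℕ}
    (M N : Fin J → Set (EuclideanSpace ℝ (Fin n)))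
    (Ms Ns : Set (PiLp 2 (fun _ : Fin J => EuclideanSpace ℝ (Fin n))))
    (hMs : Ms.Nonempty) (hNs : Ns.Nonempty)
    (hMsub : ∀ p ∈ Ms, ∀ j, p j ∈ M j) (hNsub : ∀ q ∈ Ns, ∀ j, q j ∈ N j)
    (hMsurj : ∀ k : Fin J, ∀ m ∈ M k, ∃ p ∈ Ms, p k = m)
    (hNsurj : ∀ k : Fin J, ∀ m ∈ N k, ∃ q ∈ Ns, q k = m)
    (hMc : IsCompact Ms) (hNc : IsCompact Ns)
    (hMjc : ∀ j, IsCompact (M j)) (hNjc : ∀ j, IsCompact (N j))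
    (hMjne : ∀ j, (M j).Nonempty) (hNjne : ∀ j, (N j).Nonempty) :
    ∀ k : Fin J, (minSep Ms Ns) ^ 2 ≤
      (minSep (M k) (N k)) ^ 2 + ∑ j ∈ Finset.univ.erase k, (maxSep (M j) (N j)) ^ 2 := by
  intro k
  -- the min separation of the k-th components is attained
  have hkc : IsCompact (Set.image2 dist (M k) (N k)) :=
    image2_dist_compact (hMjc k) (hNjc k)
  have hkne : (Set.image2 dist (M k) (N k)).Nonempty :=
    (hMjne k).image2 (hNjne k)
  have hmem : minSep (M k) (N k) ∈ Set.image2 dist (M k) (N k) :=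
    hkc.sInf_mem hkne
  obtain ⟨m, hm, nn, hn, hd⟩ := hmem
  obtain ⟨p, hp, hpk⟩ := hMsurj k m hm
  obtain ⟨q, hq, hqk⟩ := hNsurj k nn hn
  -- minSep Ms Ns ≤ dist p q
  have h1 : minSep Ms Ns ≤ dist p q := by
    apply csInf_le
    · exact ⟨0, by rintro x ⟨a, _, b, _, rfl⟩; exact dist_nonneg⟩
    · exact Set.mem_image2_of_mem hp hq
  have h2 : (minSep Ms Ns) ^ 2 ≤ dist p q ^ 2 :=
    pow_le_pow_left₀ (minSep_nonneg _ _) h1 2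
  refine h2.trans ?_
  have hdist : dist p q ^ 2 = ∑ j, dist (p j) (q j) ^ 2 := by
    rw [PiLp.dist_eq_of_L2, Real.sq_sqrt]
    exact Finset.sum_nonneg fun j _ => sq_nonneg _
  rw [hdist, ← Finset.add_sum_erase _ _ (Finset.mem_univ k)]
  gcongr with j hj
  · rw [hpk, hqk, hd]
  · -- dist (p j) (q j) ≤ maxSep (M j) (N j)
    have hb : BddAbove (Set.image2 dist (M j) (N j)) :=
      (image2_dist_compact (hMjc j) (hNjc j)).bddAbove
    have : dist (p j) (q j) ≤ maxSep (M j) (N j) :=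
      le_csSup hb (Set.mem_image2_of_mem (hMsub p hp j) (hNsub q hq j))
    exact this
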